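/- Let $\alpha \in (0,1)$, $H \in (1/2,1)$ with $\alpha + H > 3/2$, and set $\zeta = 4 - 2H - 2\alpha < 1$. Then the double series $\sum_{m,k \geq 0} \frac{C^{m+k}}{\sqrt{m!}\, k!}\sqrt{\frac{[2(m+k)]!}{\Gamma((m+k)(2H+2\alpha-2)+1)}}$ converges for every constant $C > 0$. -/

import Mathlib

open Real

-- L1
lemma fact_add_le (a d : ℕ) : Nat.factorial (a + d) ≤ Nat.factorial a * (a + d) ^ d := by
  have h := Nat.factorial_mul_descFactorial (n := a + d) (k := d) (Nat.le_add_left d a)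
  rw [Nat.add_sub_cancel] at h
  calc Nat.factorial (a + d) = Nat.factorial a * (a + d).descFactorial d := h.symm
    _ ≤ Nat.factorial a * (a + d) ^ d :=
        Nat.mul_le_mul_left _ (Nat.descFactorial_le_pow _ _)

-- L6
lemma fact_lb (m : ℕ) :
    ((m : ℝ) + 1) ^ m * Real.exp (-((m : ℝ) + 1)) ≤ (Nat.factorial m : ℝ) := by
  have ha : (0:ℝ) ≤ (m : ℝ) + 1 := by positivity
  have hf : (0:ℝ) < (Nat.factorial m : ℝ) := by exact_mod_cast Nat.factorial_pos m
  have h1 : ((m : ℝ) + 1) ^ m / (Nat.factorial m : ℝ) ≤ Real.exp ((m : ℝ) + 1) := by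
    calc ((m : ℝ) + 1) ^ m / (Nat.factorial m : ℝ)
        ≤ ∑ i ∈ Finset.range (m + 1), ((m : ℝ) + 1) ^ i / (Nat.factorial i : ℝ) := by
          apply Finset.single_le_sum (f := fun i => ((m : ℝ) + 1) ^ i / (Nat.factorial i : ℝ))
            (fun i _ => by positivity) (Finset.self_mem_range_succ m)
      _ ≤ Real.exp ((m : ℝ) + 1) := Real.sum_le_exp_of_nonneg ha _
  rw [div_le_iff₀ hf] at h1
  rw [Real.exp_neg]
  rw [mul_inv_le_iff₀ (Real.exp_pos _)]
  linarith [h1]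

-- L4
lemma entropy_log (a b : ℝ) (ha : 1 ≤ a) (hb : 1 ≤ b) :
    (a + b) * Real.log ((a + b) / 2) ≤ a * Real.log a + b * Real.log b := by
  have ha0 : 0 < a := by linarith
  have hb0 : 0 < b := by linarith
  have hab : 0 < a + b := by linarith
  have h1 : Real.log ((a + b) / (2 * a)) ≤ (a + b) / (2 * a) - 1 :=
    Real.log_le_sub_one_of_pos (by positivity)
  have h2 : Real.log ((a + b) / (2 * b)) ≤ (a + b) / (2 * b) - 1 :=
    Real.log_le_sub_one_of_pos (by positivity)
  have e1 : Real.log ((a + b) / (2 * a)) = Real.log ((a + b) / 2) - Real.log a := by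
    rw [Real.log_div (by positivity) (by positivity), Real.log_div (by positivity) two_ne_zero,
      Real.log_mul two_ne_zero (ne_of_gt ha0)]
    ring
  have e2 : Real.log ((a + b) / (2 * b)) = Real.log ((a + b) / 2) - Real.log b := by
    rw [Real.log_div (by positivity) (by positivity), Real.log_div (by positivity) two_ne_zero,
      Real.log_mul two_ne_zero (ne_of_gt hb0)]
    ring
  rw [e1] at h1
  rw [e2] at h2
  have m1 : a * (Real.log ((a + b) / 2) - Real.log a) ≤ (a + b) / 2 - a := by
    have := mul_le_mul_of_nonneg_left h1 ha0.le
    have e3 : a * ((a + b) / (2 * a) - 1) = (a + b) / 2 - a := by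
      field_simp
    linarith [e3 ▸ this]
  have m2 : b * (Real.log ((a + b) / 2) - Real.log b) ≤ (a + b) / 2 - b := by
    have := mul_le_mul_of_nonneg_left h2 hb0.le
    have e3 : b * ((a + b) / (2 * b) - 1) = (a + b) / 2 - b := by
      field_simp
    linarith [e3 ▸ this]
  nlinarith [m1, m2]

-- L5
lemma entropy_pow (a b t : ℝ) (ha : 1 ≤ a) (hb : 1 ≤ b) (ht : 0 ≤ t) :
    (a + b) ^ ((a + b) * t) ≤ 2 ^ ((a + b) * t) * a ^ (a * t) * b ^ (b * t) := by
  have ha0 : 0 < a := by linarith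
  have hb0 : 0 < b := by linarith
  have hab : (0:ℝ) < a + b := by linarith
  rw [Real.rpow_def_of_pos hab, Real.rpow_def_of_pos two_pos, Real.rpow_def_of_pos ha0,
    Real.rpow_def_of_pos hb0, ← Real.exp_add, ← Real.exp_add]
  apply Real.exp_le_exp.mpr
  have key := entropy_log a b ha hb
  have hlog : Real.log ((a + b) / 2) = Real.log (a + b) - Real.log 2 :=
    Real.log_div (ne_of_gt hab) two_ne_zero
  rw [hlog] at key
  nlinarith [mul_le_mul_of_nonneg_right key ht]

-- L2
lemma gamma_ratio_bound (β : ℝ) (hβ1 : 1 < β) (hβ2 : β < 2) (n : ℕ) :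
    ((2 * n).factorial : ℝ) / Real.Gamma ((n : ℝ) * β + 1)
      ≤ (2 * (n : ℝ) + 4) ^ ((n : ℝ) * (2 - β) + 1) := by
  have hΓpos : 0 < Real.Gamma ((n : ℝ) * β + 1) := by
    apply Real.Gamma_pos_of_pos
    have : (0:ℝ) ≤ (n : ℝ) * β := by positivity
    linarith
  rcases Nat.eq_zero_or_pos n with hn | hn
  · subst hn
    simp only [Nat.cast_zero, zero_mul, zero_add, mul_zero, Nat.mul_zero, Nat.factorial_zero,
      Real.Gamma_one, Nat.cast_one]
    rw [Real.rpow_one]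
    norm_num
  · set δ : ℝ := β - 1 with hδ
    have hδ0 : 0 < δ := by simp [hδ]; linarith
    have hδ1 : δ < 1 := by simp [hδ]; linarith
    set N : ℕ := n + ⌊(n : ℝ) * δ⌋₊ with hN
    have hfl : (⌊(n : ℝ) * δ⌋₊ : ℝ) ≤ (n : ℝ) * δ := Nat.floor_le (by positivity)
    have hfl2 : (n : ℝ) * δ < (⌊(n : ℝ) * δ⌋₊ : ℝ) + 1 := Nat.lt_floor_add_one _
    have hNr : (N : ℝ) ≤ (n : ℝ) * β := by
      have : (N : ℝ) = (n : ℝ) + (⌊(n : ℝ) * δ⌋₊ : ℝ) := by push_cast [hN]; ring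
      rw [this]
      nlinarith [hfl]
    have hN2n : N ≤ 2 * n := by
      have h1 : (⌊(n : ℝ) * δ⌋₊ : ℝ) ≤ (n : ℝ) := by nlinarith [hfl]
      have h2 : ⌊(n : ℝ) * δ⌋₊ ≤ n := by exact_mod_cast h1
      omega
    have hmono : (N.factorial : ℝ) ≤ Real.Gamma ((n : ℝ) * β + 1) := by
      rw [← Real.Gamma_nat_eq_factorial]
      have hNn : n ≤ N := Nat.le_add_right _ _
      have hmem1 : ((N : ℝ) + 1) ∈ Set.Ici (2:ℝ) := by
        have : (1:ℝ) ≤ (N : ℝ) := by exact_mod_cast le_trans hn hNn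
        simp [Set.mem_Ici]; linarith
      have hmem2 : ((n : ℝ) * β + 1) ∈ Set.Ici (2:ℝ) := by
        have : (1:ℝ) ≤ (n : ℝ) * β := by
          have : (1:ℝ) ≤ (n:ℝ) := by exact_mod_cast hn
          nlinarith
        simp [Set.mem_Ici]; linarith
      exact Real.Gamma_strictMonoOn_Ici.monotoneOn hmem1 hmem2 (by linarith [hNr])
    have hfact : ((2 * n).factorial : ℝ) ≤ (N.factorial : ℝ) * ((2 * n : ℕ) : ℝ) ^ (2 * n - N) := by
      have h := fact_add_le N (2 * n - N)
      rw [Nat.add_sub_cancel' hN2n] at h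
      exact_mod_cast h
    rw [div_le_iff₀ hΓpos]
    calc ((2 * n).factorial : ℝ)
        ≤ (N.factorial : ℝ) * ((2 * n : ℕ) : ℝ) ^ (2 * n - N) := hfact
      _ ≤ Real.Gamma ((n : ℝ) * β + 1) * ((2 * n : ℕ) : ℝ) ^ (2 * n - N) := by
          apply mul_le_mul_of_nonneg_right hmono (by positivity)
      _ ≤ Real.Gamma ((n : ℝ) * β + 1) * (2 * (n : ℝ) + 4) ^ ((n : ℝ) * (2 - β) + 1) := by
          apply mul_le_mul_of_nonneg_left _ hΓpos.le
          rw [← Real.rpow_natCast ((2 * n : ℕ) : ℝ) (2 * n - N)]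
          calc ((2 * n : ℕ) : ℝ) ^ ((2 * n - N : ℕ) : ℝ)
              ≤ (2 * (n : ℝ) + 4) ^ ((2 * n - N : ℕ) : ℝ) := by
                apply Real.rpow_le_rpow (by positivity) _ (by positivity)
                push_cast; linarith
            _ ≤ (2 * (n : ℝ) + 4) ^ ((n : ℝ) * (2 - β) + 1) := by
                apply Real.rpow_le_rpow_of_exponent_le (by linarith [Nat.cast_nonneg (α := ℝ) n])
                have hc : ((2 * n - N : ℕ) : ℝ) = 2 * (n : ℝ) - (N : ℝ) := by
                  rw [Nat.cast_sub hN2n]; push_cast; ring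
                rw [hc]
                have hNcast : (N : ℝ) = (n : ℝ) + (⌊(n : ℝ) * δ⌋₊ : ℝ) := by
                  push_cast [hN]; ring
                rw [hNcast]
                have : 2 - β = 1 - δ := by simp [hδ]; ring
                rw [this]
                nlinarith [hfl2]
      _ = (2 * (n : ℝ) + 4) ^ ((n : ℝ) * (2 - β) + 1) * Real.Gamma ((n : ℝ) * β + 1) := mul_comm _ _

-- L3
lemma sqrt_ratio_bound (β : ℝ) (hβ1 : 1 < β) (hβ2 : β < 2) (n : ℕ) :
    Real.sqrt (((2 * n).factorial : ℝ) / Real.Gamma ((n : ℝ) * β + 1))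
      ≤ (2 * (n : ℝ) + 4) ^ (((n : ℝ) * (2 - β) + 1) / 2) := by
  have h2 := gamma_ratio_bound β hβ1 hβ2 n
  have he : (2 * (n : ℝ) + 4) ^ (((n : ℝ) * (2 - β) + 1) / 2)
      = Real.sqrt ((2 * (n : ℝ) + 4) ^ ((n : ℝ) * (2 - β) + 1)) := by
    rw [Real.sqrt_eq_rpow, ← Real.rpow_mul (by positivity)]
    ring_nf
  rw [he]
  exact Real.sqrt_le_sqrt h2
-- L7
lemma aux_summable (K c ε : ℝ) (hK : 0 < K) (hε : 0 < ε) :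
    Summable (fun m : ℕ => K ^ (m + 1) * ((m : ℝ) + 1) ^ (-(ε * ((m : ℝ) + 1)) + c)) := by
  set M : ℕ := max ⌈(2 * K) ^ (2 / ε)⌉₊ ⌈2 * c / ε⌉₊ with hM
  rw [← summable_nat_add_iff M]
  refine Summable.of_nonneg_of_le (f := fun n : ℕ => (1 / 2 : ℝ) ^ n)
    (fun n => by positivity) ?_
    (summable_geometric_of_lt_one (r := (1/2:ℝ)) (by norm_num) (by norm_num))
  intro n
  set m : ℕ := n + M with hm
  have ha1 : (1:ℝ) ≤ (m : ℝ) + 1 := by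
    have := Nat.cast_nonneg (α := ℝ) m; linarith
  have hMm : (M : ℝ) ≤ (m : ℝ) + 1 := by
    have : M ≤ m := Nat.le_add_left _ _
    have := Nat.cast_le (α := ℝ).mpr this
    linarith
  have hm1 : (2 * K) ^ (2 / ε) ≤ (m : ℝ) + 1 :=
    le_trans (Nat.le_ceil _) (le_trans (Nat.cast_le.mpr (le_max_left _ _)) hMm)
  have hm2 : 2 * c / ε ≤ (m : ℝ) + 1 :=
    le_trans (Nat.le_ceil _) (le_trans (Nat.cast_le.mpr (le_max_right _ _)) hMm)
  have hexp : -(ε * ((m : ℝ) + 1)) + c ≤ -(ε / 2 * ((m : ℝ) + 1)) := by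
    have hc : c ≤ ε / 2 * ((m : ℝ) + 1) := by
      rw [div_le_iff₀ hε] at hm2
      nlinarith
    linarith
  have h1 : ((m : ℝ) + 1) ^ (-(ε * ((m : ℝ) + 1)) + c) ≤ ((m : ℝ) + 1) ^ (-(ε / 2 * ((m : ℝ) + 1))) :=
    Real.rpow_le_rpow_of_exponent_le ha1 hexp
  have hbase : 2 * K ≤ ((m : ℝ) + 1) ^ (ε / 2) := by
    have h0 : (0:ℝ) < 2 * K := by positivity
    calc 2 * K = ((2 * K) ^ (2 / ε)) ^ (ε / 2) := by
          rw [← Real.rpow_mul h0.le]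
          rw [show 2 / ε * (ε / 2) = 1 by field_simp]
          exact (Real.rpow_one _).symm
      _ ≤ (((m : ℝ) + 1)) ^ (ε / 2) := Real.rpow_le_rpow (by positivity) hm1 (by positivity)
  have h2 : ((m : ℝ) + 1) ^ (-(ε / 2 * ((m : ℝ) + 1))) ≤ (2 * K) ^ (-((m : ℝ) + 1)) := by
    rw [show -(ε / 2 * ((m : ℝ) + 1)) = ε / 2 * (-((m : ℝ) + 1)) by ring,
      Real.rpow_mul (by positivity)]
    rw [Real.rpow_neg (by positivity), Real.rpow_neg (by positivity)]
    apply inv_anti₀ (by positivity)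
    exact Real.rpow_le_rpow (by positivity) hbase (by positivity)
  have hfinal : K ^ (m + 1) * ((m : ℝ) + 1) ^ (-(ε * ((m : ℝ) + 1)) + c) ≤ (1 / 2 : ℝ) ^ n := by
    calc K ^ (m + 1) * ((m : ℝ) + 1) ^ (-(ε * ((m : ℝ) + 1)) + c)
        ≤ K ^ (m + 1) * (2 * K) ^ (-((m : ℝ) + 1)) := by
          apply mul_le_mul_of_nonneg_left (le_trans h1 h2) (by positivity)
      _ = (1 / 2 : ℝ) ^ (m + 1) := by
          rw [Real.rpow_neg (by positivity), show ((m : ℝ) + 1) = ((m + 1 : ℕ) : ℝ) by push_cast; ring,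
            Real.rpow_natCast]
          rw [mul_pow]
          field_simp
          rw [← mul_pow]; norm_num
      _ ≤ (1 / 2 : ℝ) ^ n := by
          apply pow_le_pow_of_le_one (by norm_num) (by norm_num)
          omega
  exact hfinal
lemma pointwise (C β : ℝ) (hC : 0 < C) (hβ1 : 1 < β) (hβ2 : β < 2) (m k : ℕ) :
    C ^ (m + k) / (Real.sqrt (Nat.factorial m : ℝ) * (Nat.factorial k : ℝ)) *
      Real.sqrt ((Nat.factorial (2 * (m + k)) : ℝ) /
        Real.Gamma (((m + k : ℕ) : ℝ) * β + 1))
    ≤ (C ^ m * 2 ^ ((m : ℝ) + 1) * Real.exp (((m : ℝ) + 1) / 2) *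
        ((m : ℝ) + 1) ^ (((m : ℝ) + 1) * ((2 - β) - 1) / 2 + 1)) *
      (C ^ k * 2 ^ ((k : ℝ) + 1) * Real.exp ((k : ℝ) + 1) *
        ((k : ℝ) + 1) ^ (((k : ℝ) + 1) * ((2 - β) - 2) / 2 + 3 / 2)) := by
  set ζ : ℝ := 2 - β with hζ
  have hζ0 : 0 < ζ := by simp only [hζ]; linarith
  have hζ1 : ζ < 1 := by simp only [hζ]; linarith
  set n : ℕ := m + k with hn
  set a : ℝ := (m : ℝ) + 1 with ha
  set b : ℝ := (k : ℝ) + 1 with hb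
  have ha1 : (1:ℝ) ≤ a := by simp only [ha]; have := Nat.cast_nonneg (α := ℝ) m; linarith
  have hb1 : (1:ℝ) ≤ b := by simp only [hb]; have := Nat.cast_nonneg (α := ℝ) k; linarith
  have ha0 : (0:ℝ) < a := by linarith
  have hb0 : (0:ℝ) < b := by linarith
  have hab0 : (0:ℝ) < a + b := by linarith
  have hnab : (n : ℝ) = a + b - 2 := by simp only [hn, ha, hb]; push_cast; ring
  -- the numerator bound
  have r5 : (a + b) ^ (1/2 : ℝ) ≤ 2 ^ (1/2 : ℝ) * (a ^ (1/2 : ℝ) * b ^ (1/2 : ℝ)) := by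
    have hab2 : a + b ≤ 2 * (a * b) := by nlinarith
    calc (a + b) ^ (1/2 : ℝ) ≤ (2 * (a * b)) ^ (1/2 : ℝ) :=
          Real.rpow_le_rpow (by positivity) hab2 (by norm_num)
      _ = 2 ^ (1/2 : ℝ) * (a ^ (1/2 : ℝ) * b ^ (1/2 : ℝ)) := by
          rw [Real.mul_rpow (by norm_num) (by positivity),
            Real.mul_rpow (by positivity) (by positivity)]
  have hS : Real.sqrt ((Nat.factorial (2 * n) : ℝ) / Real.Gamma ((n : ℝ) * β + 1))
      ≤ 2 ^ (a + b) * (a ^ (a * (ζ/2) + 1/2) * b ^ (b * (ζ/2) + 1/2)) := by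
    have hL3 := sqrt_ratio_bound β hβ1 hβ2 n
    have e0 : 2 * (n : ℝ) + 4 = 2 * (a + b) := by rw [hnab]; ring
    rw [e0] at hL3
    calc Real.sqrt ((Nat.factorial (2 * n) : ℝ) / Real.Gamma ((n : ℝ) * β + 1))
        ≤ (2 * (a + b)) ^ (((n : ℝ) * ζ + 1) / 2) := hL3
      _ = 2 ^ (((n : ℝ) * ζ + 1) / 2) * (a + b) ^ (((n : ℝ) * ζ + 1) / 2) :=
          Real.mul_rpow (by norm_num) (by positivity)
      _ ≤ 2 ^ (((n : ℝ) * ζ + 1) / 2) * (a + b) ^ ((a + b) * (ζ/2) + 1/2) := by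
          apply mul_le_mul_of_nonneg_left _ (by positivity)
          apply Real.rpow_le_rpow_of_exponent_le (by linarith)
          rw [hnab]
          nlinarith [hζ0.le]
      _ = 2 ^ (((n : ℝ) * ζ + 1) / 2) * ((a + b) ^ ((a + b) * (ζ/2)) * (a + b) ^ (1/2 : ℝ)) := by
          rw [← Real.rpow_add hab0]
      _ ≤ 2 ^ (((n : ℝ) * ζ + 1) / 2) *
            ((2 ^ ((a + b) * (ζ/2)) * a ^ (a * (ζ/2)) * b ^ (b * (ζ/2))) *
              (2 ^ (1/2 : ℝ) * (a ^ (1/2 : ℝ) * b ^ (1/2 : ℝ)))) := by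
          apply mul_le_mul_of_nonneg_left _ (by positivity)
          exact mul_le_mul (entropy_pow a b (ζ/2) ha1 hb1 (by positivity)) r5
            (by positivity) (by positivity)
      _ = 2 ^ (((n : ℝ) * ζ + 1) / 2 + ((a + b) * (ζ/2) + 1/2)) *
            (a ^ (a * (ζ/2) + 1/2) * b ^ (b * (ζ/2) + 1/2)) := by
          rw [Real.rpow_add two_pos, Real.rpow_add two_pos, Real.rpow_add ha0,
            Real.rpow_add hb0]
          ring
      _ ≤ 2 ^ (a + b) * (a ^ (a * (ζ/2) + 1/2) * b ^ (b * (ζ/2) + 1/2)) := by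
          apply mul_le_mul_of_nonneg_right _ (by positivity)
          apply Real.rpow_le_rpow_of_exponent_le one_le_two
          rw [hnab]
          nlinarith [mul_le_mul_of_nonneg_right hζ1.le (show (0:ℝ) ≤ a + b - 1 by linarith)]
  -- denominator bounds
  have hd1 : a ^ ((a - 1)/2) * Real.exp (-(a/2)) ≤ Real.sqrt (Nat.factorial m : ℝ) := by
    have h6 := fact_lb m
    have hs := Real.sqrt_le_sqrt h6
    rw [Real.sqrt_mul (by positivity)] at hs
    have e1 : Real.sqrt (((m : ℝ) + 1) ^ m) = a ^ ((a - 1)/2) := by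
      rw [← ha, ← Real.rpow_natCast a m, Real.sqrt_eq_rpow, ← Real.rpow_mul ha0.le]
      congr 1
      have : (m : ℝ) = a - 1 := by simp only [ha]; ring
      rw [this]; ring
    have e2 : Real.sqrt (Real.exp (-((m : ℝ) + 1))) = Real.exp (-(a/2)) := by
      rw [← ha, ← Real.exp_half]
      congr 1; ring
    rw [e1, e2] at hs
    exact hs
  have hd2 : b ^ (b - 1) * Real.exp (-b) ≤ (Nat.factorial k : ℝ) := by
    have h6 := fact_lb k
    have e1 : ((k : ℝ) + 1) ^ k = b ^ (b - 1) := by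
      rw [← hb, ← Real.rpow_natCast b k]
      congr 1
      simp only [hb]; ring
    rw [e1, ← hb] at h6
    exact h6
  -- assemble
  have hden : (0:ℝ) < Real.sqrt (Nat.factorial m : ℝ) * (Nat.factorial k : ℝ) := by
    have h1 : (0:ℝ) < Real.sqrt (Nat.factorial m : ℝ) := Real.sqrt_pos.mpr (by
      exact_mod_cast Nat.factorial_pos m)
    have h2 : (0:ℝ) < (Nat.factorial k : ℝ) := by exact_mod_cast Nat.factorial_pos k
    positivity
  rw [div_mul_eq_mul_div, div_le_iff₀ hden]
  have hRHSnn : (0:ℝ) ≤ (C ^ m * 2 ^ ((m : ℝ) + 1) * Real.exp (((m : ℝ) + 1) / 2) *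
        ((m : ℝ) + 1) ^ (((m : ℝ) + 1) * ((2 - β) - 1) / 2 + 1)) *
      (C ^ k * 2 ^ ((k : ℝ) + 1) * Real.exp ((k : ℝ) + 1) *
        ((k : ℝ) + 1) ^ (((k : ℝ) + 1) * ((2 - β) - 2) / 2 + 3 / 2)) := by positivity
  calc C ^ (m + k) * Real.sqrt ((Nat.factorial (2 * (m + k)) : ℝ) /
          Real.Gamma (((m + k : ℕ) : ℝ) * β + 1))
      ≤ C ^ (m + k) * (2 ^ (a + b) * (a ^ (a * (ζ/2) + 1/2) * b ^ (b * (ζ/2) + 1/2))) :=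
        mul_le_mul_of_nonneg_left hS (by positivity)
    _ = (C ^ m * 2 ^ ((m : ℝ) + 1) * Real.exp (((m : ℝ) + 1) / 2) *
          ((m : ℝ) + 1) ^ (((m : ℝ) + 1) * ((2 - β) - 1) / 2 + 1)) *
        (C ^ k * 2 ^ ((k : ℝ) + 1) * Real.exp ((k : ℝ) + 1) *
          ((k : ℝ) + 1) ^ (((k : ℝ) + 1) * ((2 - β) - 2) / 2 + 3 / 2)) *
        ((a ^ ((a - 1)/2) * Real.exp (-(a/2))) * (b ^ (b - 1) * Real.exp (-b))) := by
        rw [pow_add C m k]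
        rw [Real.rpow_add two_pos a b]
        rw [show a * (ζ/2) + 1/2 = (a * (ζ - 1) / 2 + 1) + (a - 1)/2 by ring,
          Real.rpow_add ha0]
        rw [show b * (ζ/2) + 1/2 = (b * (ζ - 2) / 2 + 3/2) + (b - 1) by ring,
          Real.rpow_add hb0]
        simp only [← ha, ← hb, ← hζ]
        rw [show ζ - 1 = (2 - β) - 1 by simp [hζ], show ζ - 2 = (2 - β) - 2 by simp [hζ]]
        rw [Real.exp_neg, Real.exp_neg]
        field_simp [Real.exp_ne_zero]
    _ ≤ (C ^ m * 2 ^ ((m : ℝ) + 1) * Real.exp (((m : ℝ) + 1) / 2) *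
          ((m : ℝ) + 1) ^ (((m : ℝ) + 1) * ((2 - β) - 1) / 2 + 1)) *
        (C ^ k * 2 ^ ((k : ℝ) + 1) * Real.exp ((k : ℝ) + 1) *
          ((k : ℝ) + 1) ^ (((k : ℝ) + 1) * ((2 - β) - 2) / 2 + 3 / 2)) *
        (Real.sqrt (Nat.factorial m : ℝ) * (Nat.factorial k : ℝ)) := by
        apply mul_le_mul_of_nonneg_left _ hRHSnn
        exact mul_le_mul hd1 hd2 (by positivity) (Real.sqrt_nonneg _)
lemma g_summable (C β : ℝ) (hC : 0 < C) (hβ1 : 1 < β) (hβ2 : β < 2) :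
    Summable (fun m : ℕ => C ^ m * 2 ^ ((m : ℝ) + 1) * Real.exp (((m : ℝ) + 1) / 2) *
      ((m : ℝ) + 1) ^ (((m : ℝ) + 1) * ((2 - β) - 1) / 2 + 1)) := by
  refine Summable.of_nonneg_of_le (fun m => by positivity) ?_
    (aux_summable ((C + 1) * 2 * Real.exp 1) 1 ((β - 1)/2) (by positivity) (by linarith))
  intro m
  have h2 : (2:ℝ) ^ ((m : ℝ) + 1) = 2 ^ (m + 1) := by
    rw [show ((m:ℝ) + 1) = ((m + 1 : ℕ) : ℝ) by push_cast; ring, Real.rpow_natCast]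
  have hb1 : C ^ m ≤ (C + 1) ^ (m + 1) := by
    calc C ^ m ≤ (C + 1) ^ m := pow_le_pow_left₀ hC.le (by linarith) m
      _ ≤ (C + 1) ^ (m + 1) := pow_le_pow_right₀ (by linarith) (Nat.le_succ m)
  have hb3 : Real.exp (((m : ℝ) + 1) / 2) ≤ Real.exp 1 ^ (m + 1) := by
    rw [Real.exp_one_pow]
    apply Real.exp_le_exp.mpr
    have : (0:ℝ) ≤ (m : ℝ) := Nat.cast_nonneg m
    push_cast
    linarith
  rw [show ((m : ℝ) + 1) * ((2 - β) - 1) / 2 + 1 = -((β - 1)/2 * ((m : ℝ) + 1)) + 1 by ring]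
  rw [mul_pow, mul_pow, h2]
  exact mul_le_mul (mul_le_mul (mul_le_mul hb1 le_rfl (by positivity) (by positivity)) hb3
    (by positivity) (by positivity)) le_rfl (by positivity) (by positivity)

lemma h_summable (C β : ℝ) (hC : 0 < C) (hβ1 : 1 < β) (hβ2 : β < 2) :
    Summable (fun k : ℕ => C ^ k * 2 ^ ((k : ℝ) + 1) * Real.exp ((k : ℝ) + 1) *
      ((k : ℝ) + 1) ^ (((k : ℝ) + 1) * ((2 - β) - 2) / 2 + 3 / 2)) := by
  refine Summable.of_nonneg_of_le (fun k => by positivity) ?_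
    (aux_summable ((C + 1) * 2 * Real.exp 1) (3/2) (β/2) (by positivity) (by linarith))
  intro k
  have h2 : (2:ℝ) ^ ((k : ℝ) + 1) = 2 ^ (k + 1) := by
    rw [show ((k:ℝ) + 1) = ((k + 1 : ℕ) : ℝ) by push_cast; ring, Real.rpow_natCast]
  have hb1 : C ^ k ≤ (C + 1) ^ (k + 1) := by
    calc C ^ k ≤ (C + 1) ^ k := pow_le_pow_left₀ hC.le (by linarith) k
      _ ≤ (C + 1) ^ (k + 1) := pow_le_pow_right₀ (by linarith) (Nat.le_succ k)
  have hb3 : Real.exp ((k : ℝ) + 1) ≤ Real.exp 1 ^ (k + 1) := by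
    rw [Real.exp_one_pow]
    apply Real.exp_le_exp.mpr
    push_cast
    linarith
  rw [show ((k : ℝ) + 1) * ((2 - β) - 2) / 2 + 3/2 = -(β/2 * ((k : ℝ) + 1)) + 3/2 by ring]
  rw [mul_pow, mul_pow, h2]
  exact mul_le_mul (mul_le_mul (mul_le_mul hb1 le_rfl (by positivity) (by positivity)) hb3
    (by positivity) (by positivity)) le_rfl (by positivity) (by positivity)

set_option maxHeartbeats 1000000 in
theorem stmt_15 (α H : ℝ) (hα : α ∈ Set.Ioo (0 : ℝ) 1) (hH : H ∈ Set.Ioo (1 / 2 : ℝ) 1)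
    (h : 3 / 2 < α + H) (C : ℝ) (hC : 0 < C) :
    Summable (fun p : ℕ × ℕ =>
      C ^ (p.1 + p.2) /
          (Real.sqrt (Nat.factorial p.1 : ℝ) * (Nat.factorial p.2 : ℝ)) *
        Real.sqrt ((Nat.factorial (2 * (p.1 + p.2)) : ℝ) /
          Real.Gamma (((p.1 + p.2 : ℕ) : ℝ) * (2 * H + 2 * α - 2) + 1))) := by
  obtain ⟨hα0, hα1⟩ := hα
  obtain ⟨hH0, hH1⟩ := hH
  have hβ1 : 1 < 2 * H + 2 * α - 2 := by linarith
  have hβ2 : 2 * H + 2 * α - 2 < 2 := by linarith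
  set β : ℝ := 2 * H + 2 * α - 2 with hβ
  have hgh : Summable (fun p : ℕ × ℕ =>
      (C ^ p.1 * 2 ^ ((p.1 : ℝ) + 1) * Real.exp (((p.1 : ℝ) + 1) / 2) *
        ((p.1 : ℝ) + 1) ^ (((p.1 : ℝ) + 1) * ((2 - β) - 1) / 2 + 1)) *
      (C ^ p.2 * 2 ^ ((p.2 : ℝ) + 1) * Real.exp ((p.2 : ℝ) + 1) *
        ((p.2 : ℝ) + 1) ^ (((p.2 : ℝ) + 1) * ((2 - β) - 2) / 2 + 3 / 2))) :=
    Summable.mul_of_nonneg (g_summable C β hC hβ1 hβ2) (h_summable C β hC hβ1 hβ2)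
      (fun m => by positivity) (fun k => by positivity)
  refine Summable.of_nonneg_of_le (fun p => ?_) (fun p => ?_) hgh
  · have h1 : (0:ℝ) ≤ Real.sqrt (Nat.factorial p.1 : ℝ) := Real.sqrt_nonneg _
    have h2 : (0:ℝ) ≤ (Nat.factorial p.2 : ℝ) := by positivity
    positivity
  · exact pointwise C β hC hβ1 hβ2 p.1 p.2
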